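/- Let X be a topological space and (f_n)_{n≥0} a sequence of continuous real-valued functions on X with f_0 ≡ 0. Suppose there is a constant M such that ∑_{n=0}^∞ |f_n(x) − f_{n+1}(x)| ≤ M for all x ∈ X. Then the pointwise limit f of (f_n) exists and can be written as f = F_2 − F_1 where F_1 and F_2 are bounded lower semicontinuous functions on X (namely F_1 = ∑ (f_n − f_{n+1})^+ and F_2 = ∑ (f_n − f_{n+1})^−). -/
import Mathlib

open Filter Topology

/-- If `(f n)` are continuous with `f 0 ≡ 0` and uniformly bounded variation, then
the pointwise limit exists and equals `F₂ - F₁` for bounded lower semicontinuous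
functions `F₁, F₂`. -/
theorem stmt_6 {X : Type*} [TopologicalSpace X] (f : ℕ → X → ℝ)
    (hcont : ∀ n, Continuous (f n)) (h0 : ∀ x, f 0 x = 0) (M : ℝ)
    (hM : ∀ x, ∀ K : ℕ, ∑ n ∈ Finset.range K, |f n x - f (n + 1) x| ≤ M) :
    ∃ F₁ F₂ : X → ℝ,
      LowerSemicontinuous F₁ ∧ LowerSemicontinuous F₂ ∧
      (∃ C : ℝ, ∀ x, |F₁ x| ≤ C) ∧ (∃ C : ℝ, ∀ x, |F₂ x| ≤ C) ∧
      ∀ x, Tendsto (fun n => f n x) atTop (𝓝 (F₂ x - F₁ x)) := by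
  set g : ℕ → X → ℝ := fun n x => f n x - f (n + 1) x with hg
  set S₁ : ℕ → X → ℝ := fun K x => ∑ n ∈ Finset.range K, max (g n x) 0 with hS₁
  set S₂ : ℕ → X → ℝ := fun K x => ∑ n ∈ Finset.range K, max (-(g n x)) 0 with hS₂
  have hS₁M : ∀ x K, S₁ K x ≤ M := by
    intro x K
    refine le_trans (Finset.sum_le_sum fun n _ => ?_) (hM x K)
    exact max_le (le_abs_self _) (abs_nonneg _)
  have hS₂M : ∀ x K, S₂ K x ≤ M := by
    intro x K
    refine le_trans (Finset.sum_le_sum fun n _ => ?_) (hM x K)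
    exact max_le (neg_le_abs _) (abs_nonneg _)
  have hmono₁ : ∀ x, Monotone fun K => S₁ K x := fun x =>
    monotone_nat_of_le_succ fun K => by
      simp only [hS₁, Finset.sum_range_succ]
      exact le_add_of_nonneg_right (le_max_right _ _)
  have hmono₂ : ∀ x, Monotone fun K => S₂ K x := fun x =>
    monotone_nat_of_le_succ fun K => by
      simp only [hS₂, Finset.sum_range_succ]
      exact le_add_of_nonneg_right (le_max_right _ _)
  have hbdd₁ : ∀ x, BddAbove (Set.range fun K => S₁ K x) := fun x =>
    ⟨M, by rintro _ ⟨K, rfl⟩; exact hS₁M x K⟩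
  have hbdd₂ : ∀ x, BddAbove (Set.range fun K => S₂ K x) := fun x =>
    ⟨M, by rintro _ ⟨K, rfl⟩; exact hS₂M x K⟩
  have hScont₁ : ∀ K, Continuous fun x => S₁ K x := fun K =>
    continuous_finset_sum _ fun n _ => ((hcont n).sub (hcont (n + 1))).max continuous_const
  have hScont₂ : ∀ K, Continuous fun x => S₂ K x := fun K =>
    continuous_finset_sum _ fun n _ =>
      (((hcont n).sub (hcont (n + 1))).neg).max continuous_const
  refine ⟨fun x => ⨆ K, S₁ K x, fun x => ⨆ K, S₂ K x,
    lowerSemicontinuous_ciSup hbdd₁ fun K => (hScont₁ K).lowerSemicontinuous,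
    lowerSemicontinuous_ciSup hbdd₂ fun K => (hScont₂ K).lowerSemicontinuous, ?_, ?_, ?_⟩
  · refine ⟨M, fun x => ?_⟩
    have h0M : (0 : ℝ) ≤ M := by simpa using hM x 0
    rw [abs_le]
    constructor
    · exact le_trans (neg_nonpos.mpr h0M) (le_ciSup_of_le (hbdd₁ x) 0 (by simp [hS₁]))
    · exact ciSup_le fun K => hS₁M x K
  · refine ⟨M, fun x => ?_⟩
    have h0M : (0 : ℝ) ≤ M := by simpa using hM x 0
    rw [abs_le]
    constructor
    · exact le_trans (neg_nonpos.mpr h0M) (le_ciSup_of_le (hbdd₂ x) 0 (by simp [hS₂]))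
    · exact ciSup_le fun K => hS₂M x K
  · intro x
    have h₁ : Tendsto (fun K => S₁ K x) atTop (𝓝 (⨆ K, S₁ K x)) :=
      tendsto_atTop_ciSup (hmono₁ x) (hbdd₁ x)
    have h₂ : Tendsto (fun K => S₂ K x) atTop (𝓝 (⨆ K, S₂ K x)) :=
      tendsto_atTop_ciSup (hmono₂ x) (hbdd₂ x)
    have key : ∀ K, f K x = S₂ K x - S₁ K x := by
      intro K
      have htel : ∑ n ∈ Finset.range K, g n x = f 0 x - f K x :=
        Finset.sum_range_sub' (fun n => f n x) K
      have : ∀ n, g n x = max (g n x) 0 - max (-(g n x)) 0 := by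
        intro n; rcases le_or_gt (g n x) 0 with h | h
        · rw [max_eq_right h, max_eq_left (by linarith)]; ring
        · rw [max_eq_left h.le, max_eq_right (by linarith)]; ring
      have := Finset.sum_congr rfl fun n (_ : n ∈ Finset.range K) => this n
      rw [this, Finset.sum_sub_distrib] at htel
      simp only [h0 x] at htel
      simp only [hS₁, hS₂]
      linarith
    simp only [key]
    exact h₂.sub h₁
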